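/- Let 𝒯 be an additive category equipped with a right triangulated structure (Ψ,Δ) and a left triangulated structure (Φ,∇) such that (Ψ,Φ) is an adjoint pair with unit η and counit ε. Then (𝒯,Ψ,Φ,Δ,∇) is a pre-triangulated category (i.e. satisfies conditions (b) and (c)) if and only if the following two conditions hold: (b′) for every right triangle Φ(N) →^{u} L →^{v′} M′ →^{w′} Ψ(Φ(N)) in Δ and every left triangle Φ(N) →^{u} L →^{v} M →^{w} N in ∇ with the same first morphism u, there exists γ: M′ → M with γ ∘ v′ = v and w ∘ γ = ε_N ∘ w′; (c′) for every right triangle A →^{f} B →^{g} C →^{h} Ψ(A) in Δ and every left triangle Φ(Ψ(A)) →^{f′} B′ →^{g′} C →^{h} Ψ(A) in ∇ with the same last morphism h, there exists γ: B → B′ with γ ∘ f = f′ ∘ η_A and g′ ∘ γ = g. -/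
import Mathlib


open CategoryTheory CategoryTheory.Limits

universe v u

namespace LiPretriangulated

variable {𝒯 : Type u} [Category.{v} 𝒯] [Preadditive 𝒯] [HasZeroObject 𝒯]

/-- A right `Ψ`-sequence `A → B → C → Ψ(A)`. -/
structure RightTriangle (Ψ : 𝒯 ⥤ 𝒯) where
  obj₁ : 𝒯
  obj₂ : 𝒯
  obj₃ : 𝒯
  f : obj₁ ⟶ obj₂
  g : obj₂ ⟶ obj₃
  h : obj₃ ⟶ Ψ.obj obj₁

/-- A left `Φ`-sequence `Φ(N) → L → M → N`. -/
structure LeftTriangle (Φ : 𝒯 ⥤ 𝒯) where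
  obj₁ : 𝒯
  obj₂ : 𝒯
  obj₃ : 𝒯
  u : Φ.obj obj₃ ⟶ obj₁
  v : obj₁ ⟶ obj₂
  w : obj₂ ⟶ obj₃

open ZeroObject in
/-- A right triangulated structure `(Ψ, Δ)` on `𝒯`: a class of right triangles,
closed under isomorphisms, satisfying the axioms (RT1)–(RT4). -/
structure RightTriangulatedStruct (Ψ : 𝒯 ⥤ 𝒯) where
  dist : Set (RightTriangle Ψ)
  iso_closed : ∀ (T T' : RightTriangle Ψ), T ∈ dist →
    ∀ (α : T.obj₁ ≅ T'.obj₁) (β : T.obj₂ ≅ T'.obj₂) (γ : T.obj₃ ≅ T'.obj₃),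
      T.f ≫ β.hom = α.hom ≫ T'.f → T.g ≫ γ.hom = β.hom ≫ T'.g →
      T.h ≫ Ψ.map α.hom = γ.hom ≫ T'.h → T' ∈ dist
  rt1a : ∀ {A B : 𝒯} (f : A ⟶ B), ∃ (Z : 𝒯) (g : B ⟶ Z) (h : Z ⟶ Ψ.obj A),
    (⟨A, B, Z, f, g, h⟩ : RightTriangle Ψ) ∈ dist
  rt1b : ∀ A : 𝒯, (⟨0, A, A, 0, 𝟙 A, 0⟩ : RightTriangle Ψ) ∈ dist
  rt2 : ∀ T : RightTriangle Ψ, T ∈ dist →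
    (⟨T.obj₂, T.obj₃, Ψ.obj T.obj₁, T.g, T.h, -Ψ.map T.f⟩ : RightTriangle Ψ) ∈ dist
  rt3 : ∀ (T T' : RightTriangle Ψ), T ∈ dist → T' ∈ dist →
    ∀ (α : T.obj₁ ⟶ T'.obj₁) (β : T.obj₂ ⟶ T'.obj₂), T.f ≫ β = α ≫ T'.f →
      ∃ γ : T.obj₃ ⟶ T'.obj₃, T.g ≫ γ = β ≫ T'.g ∧ T.h ≫ Ψ.map α = γ ≫ T'.h
  rt4 : ∀ {A B Z C' A' B' : 𝒯} (f : A ⟶ B) (g : B ⟶ Z)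
    (l : B ⟶ C') (m : C' ⟶ Ψ.obj A) (h : Z ⟶ A') (j : A' ⟶ Ψ.obj B)
    (u : Z ⟶ B') (v : B' ⟶ Ψ.obj A),
    (⟨A, B, C', f, l, m⟩ : RightTriangle Ψ) ∈ dist →
    (⟨B, Z, A', g, h, j⟩ : RightTriangle Ψ) ∈ dist →
    (⟨A, Z, B', f ≫ g, u, v⟩ : RightTriangle Ψ) ∈ dist →
    ∃ (r : C' ⟶ B') (s : B' ⟶ A'),
      l ≫ r = g ≫ u ∧ r ≫ v = m ∧ u ≫ s = h ∧ s ≫ j = v ≫ Ψ.map f ∧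
      (⟨C', B', A', r, s, j ≫ Ψ.map l⟩ : RightTriangle Ψ) ∈ dist

open ZeroObject in
/-- A left triangulated structure `(Φ, ∇)` on `𝒯`: a class of left triangles,
closed under isomorphisms, satisfying the duals (LT1)–(LT4) of (RT1)–(RT4). -/
structure LeftTriangulatedStruct (Φ : 𝒯 ⥤ 𝒯) where
  dist : Set (LeftTriangle Φ)
  iso_closed : ∀ (T T' : LeftTriangle Φ), T ∈ dist →
    ∀ (α : T.obj₁ ≅ T'.obj₁) (β : T.obj₂ ≅ T'.obj₂) (γ : T.obj₃ ≅ T'.obj₃),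
      T.u ≫ α.hom = Φ.map γ.hom ≫ T'.u → T.v ≫ β.hom = α.hom ≫ T'.v →
      T.w ≫ γ.hom = β.hom ≫ T'.w → T' ∈ dist
  lt1a : ∀ {M N : 𝒯} (w : M ⟶ N), ∃ (L : 𝒯) (u : Φ.obj N ⟶ L) (v : L ⟶ M),
    (⟨L, M, N, u, v, w⟩ : LeftTriangle Φ) ∈ dist
  lt1b : ∀ A : 𝒯, (⟨A, A, 0, 0, 𝟙 A, 0⟩ : LeftTriangle Φ) ∈ dist
  lt2 : ∀ T : LeftTriangle Φ, T ∈ dist →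
    (⟨Φ.obj T.obj₃, T.obj₁, T.obj₂, -Φ.map T.w, T.u, T.v⟩ : LeftTriangle Φ) ∈ dist
  lt3 : ∀ (T T' : LeftTriangle Φ), T ∈ dist → T' ∈ dist →
    ∀ (β : T.obj₂ ⟶ T'.obj₂) (γ : T.obj₃ ⟶ T'.obj₃), T.w ≫ γ = β ≫ T'.w →
      ∃ α : T.obj₁ ⟶ T'.obj₁, T.v ≫ β = α ≫ T'.v ∧ T.u ≫ α = Φ.map γ ≫ T'.u
  lt4 : ∀ {P M N L₁ L₂ L₃ : 𝒯} (y : P ⟶ M) (w : M ⟶ N)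
    (u₁ : Φ.obj N ⟶ L₁) (v₁ : L₁ ⟶ M) (u₂ : Φ.obj M ⟶ L₂) (v₂ : L₂ ⟶ P)
    (u₃ : Φ.obj N ⟶ L₃) (v₃ : L₃ ⟶ P),
    (⟨L₁, M, N, u₁, v₁, w⟩ : LeftTriangle Φ) ∈ dist →
    (⟨L₂, P, M, u₂, v₂, y⟩ : LeftTriangle Φ) ∈ dist →
    (⟨L₃, P, N, u₃, v₃, y ≫ w⟩ : LeftTriangle Φ) ∈ dist →
    ∃ (r : L₃ ⟶ L₁) (s : L₂ ⟶ L₃),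
      r ≫ v₁ = v₃ ≫ y ∧ u₃ ≫ r = u₁ ∧ s ≫ v₃ = v₂ ∧ u₂ ≫ s = Φ.map w ≫ u₃ ∧
      (⟨L₂, L₃, L₁, Φ.map v₁ ≫ u₂, s, r⟩ : LeftTriangle Φ) ∈ dist

section Conditions

variable {Ψ Φ : 𝒯 ⥤ 𝒯}

/-- Condition (b) of a pre-triangulated category. -/
def CondB (RT : RightTriangulatedStruct Ψ) (LT : LeftTriangulatedStruct Φ)
    (adj : Ψ ⊣ Φ) : Prop :=
  ∀ (T : RightTriangle Ψ), T ∈ RT.dist → ∀ (S : LeftTriangle Φ), S ∈ LT.dist →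
    ∀ (α : T.obj₁ ⟶ Φ.obj S.obj₃) (β : T.obj₂ ⟶ S.obj₁),
      T.f ≫ β = α ≫ S.u →
      ∃ γ : T.obj₃ ⟶ S.obj₂,
        T.g ≫ γ = β ≫ S.v ∧
        γ ≫ S.w = T.h ≫ Ψ.map α ≫ adj.counit.app S.obj₃

/-- Condition (c) of a pre-triangulated category. -/
def CondC (RT : RightTriangulatedStruct Ψ) (LT : LeftTriangulatedStruct Φ)
    (adj : Ψ ⊣ Φ) : Prop :=
  ∀ (T : RightTriangle Ψ), T ∈ RT.dist → ∀ (S : LeftTriangle Φ), S ∈ LT.dist →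
    ∀ (α : Ψ.obj T.obj₁ ⟶ S.obj₃) (β : T.obj₃ ⟶ S.obj₂),
      T.h ≫ α = β ≫ S.w →
      ∃ γ : T.obj₂ ⟶ S.obj₁,
        T.f ≫ γ = (adj.unit.app T.obj₁ ≫ Φ.map α) ≫ S.u ∧
        γ ≫ S.v = T.g ≫ β

/-- Condition (b′). -/
def CondB' (RT : RightTriangulatedStruct Ψ) (LT : LeftTriangulatedStruct Φ)
    (adj : Ψ ⊣ Φ) : Prop :=
  ∀ (S : LeftTriangle Φ), S ∈ LT.dist →
    ∀ (M' : 𝒯) (v' : S.obj₁ ⟶ M') (w' : M' ⟶ Ψ.obj (Φ.obj S.obj₃)),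
      (⟨Φ.obj S.obj₃, S.obj₁, M', S.u, v', w'⟩ : RightTriangle Ψ) ∈ RT.dist →
      ∃ γ : M' ⟶ S.obj₂, v' ≫ γ = S.v ∧ γ ≫ S.w = w' ≫ adj.counit.app S.obj₃

/-- Condition (c′). -/
def CondC' (RT : RightTriangulatedStruct Ψ) (LT : LeftTriangulatedStruct Φ)
    (adj : Ψ ⊣ Φ) : Prop :=
  ∀ (T : RightTriangle Ψ), T ∈ RT.dist →
    ∀ (B' : 𝒯) (f' : Φ.obj (Ψ.obj T.obj₁) ⟶ B') (g' : B' ⟶ T.obj₃),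
      (⟨B', T.obj₃, Ψ.obj T.obj₁, f', g', T.h⟩ : LeftTriangle Φ) ∈ LT.dist →
      ∃ γ : T.obj₂ ⟶ B', T.f ≫ γ = adj.unit.app T.obj₁ ≫ f' ∧ γ ≫ g' = T.g

end Conditions

/-- Lemma 5.2: `(𝒯, Ψ, Φ, Δ, ∇)` is a pre-triangulated category (conditions (b)
and (c)) if and only if the special cases (b′) and (c′) hold. -/
theorem pretriangulated_iff {Ψ Φ : 𝒯 ⥤ 𝒯} [Ψ.Additive] [Φ.Additive]
    (RT : RightTriangulatedStruct Ψ) (LT : LeftTriangulatedStruct Φ)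
    (adj : Ψ ⊣ Φ) :
    (CondB RT LT adj ∧ CondC RT LT adj) ↔ (CondB' RT LT adj ∧ CondC' RT LT adj) := by
  constructor
  · rintro ⟨hb, hc⟩
    constructor
    · intro S hS M' v' w' hT
      obtain ⟨γ, h1, h2⟩ := hb ⟨Φ.obj S.obj₃, S.obj₁, M', S.u, v', w'⟩ hT S hS
        (𝟙 _) (𝟙 _) (by simp)
      exact ⟨γ, by simpa using h1, by simpa using h2⟩
    · intro T hT B' f' g' hS
      obtain ⟨γ, h1, h2⟩ := hc T hT ⟨B', T.obj₃, Ψ.obj T.obj₁, f', g', T.h⟩ hS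
        (𝟙 _) (𝟙 _) (by simp)
      exact ⟨γ, by simpa using h1, by simpa using h2⟩
  · rintro ⟨hb', hc'⟩
    constructor
    · intro T hT S hS α β hcomm
      obtain ⟨M₀, v₀, w₀, h₀⟩ := RT.rt1a S.u
      obtain ⟨γ₀, hγ₀1, hγ₀2⟩ := hb' S hS M₀ v₀ w₀ h₀
      obtain ⟨δ, hδ1, hδ2⟩ := RT.rt3 T ⟨Φ.obj S.obj₃, S.obj₁, M₀, S.u, v₀, w₀⟩
        hT h₀ α β hcomm
      refine ⟨δ ≫ γ₀, ?_, ?_⟩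
      · rw [← Category.assoc, hδ1, Category.assoc, hγ₀1]
      · rw [Category.assoc, hγ₀2, ← Category.assoc, ← hδ2, Category.assoc]
    · intro T hT S hS α β hcomm
      obtain ⟨L₀, u₀, v₀, h₀⟩ := LT.lt1a T.h
      obtain ⟨γ₀, hγ₀1, hγ₀2⟩ := hc' T hT L₀ u₀ v₀ h₀
      obtain ⟨δ, hδ1, hδ2⟩ := LT.lt3 ⟨L₀, T.obj₃, Ψ.obj T.obj₁, u₀, v₀, T.h⟩
        S h₀ hS β α hcomm
      refine ⟨γ₀ ≫ δ, ?_, ?_⟩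
      · rw [← Category.assoc, hγ₀1, Category.assoc, hδ2, ← Category.assoc]
      · rw [Category.assoc, ← hδ1, ← Category.assoc, hγ₀2]

end LiPretriangulated
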